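/- arXiv:1302.3501 — 6 statements merged into one kernel-verified Lean document; each statement's English description precedes it below -/
import Mathlib

section
/- Let X and Y be real Hilbert spaces and let G : X → Y be Fréchet differentiable on the closed ball B of radius 2r around u₀ ∈ X, with derivative DG(u) a continuous linear map for each u ∈ B. Assume DG is bounded on B (there is M > 0 with ‖DG(u)‖ ≤ M for all u ∈ B) and that G satisfies the tangential cone condition: there is c > 0 such that ‖G(u) − G(ũ) − DG(u)(u − ũ)‖_Y ≤ c · ‖u − ũ‖_X · ‖G(u) − G(ũ)‖_Y for all u, ũ ∈ B. Fix ρ ∈ (0,1) and τ > 1/ρ, and let u† ∈ X denote the true parameter. Then there exists ε > 0 with the following property: whenever u⋆ ∈ X satisfies G(u⋆) = G(u†) and ‖u₀ − u⋆‖_X ≤ ε, η > 0, and y ∈ Y satisfies ‖y − G(u†)‖_Y ≤ η, every sequence (u_m) in X with u_0 = u₀ obeying the regularizing Levenberg–Marquardt recursion — namely, for each m such that ‖y − G(u_m)‖_Y > τη there exist h_m ∈ X and α_m > 0 with (DG(u_m)† ∘ DG(u_m) + α_m • id)(h_m) = DG(u_m)†(y − G(u_m)) (where DG(u_m)† denotes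 the Hilbert-space adjoint of DG(u_m)), ‖y − G(u_m) − DG(u_m) h_m‖_Y = ρ ‖y − G(u_m)‖_Y, and u_{m+1} = u_m + h_m — terminates by the discrepancy principle after finitely many iterations: there exists a finite index k with ‖y − G(u_k)‖_Y ≤ τη. -/
open Metric RealInnerProductSpace

set_option maxHeartbeats 2000000 in
/-- Hanke's regularizing Levenberg–Marquardt scheme terminates after finitely many
iterations by the discrepancy principle. `G : X → Y` is Fréchet differentiable on the
closed ball `B` of radius `2r` around `u₀`, with derivative `DG u` bounded on `B` and
satisfying the tangential cone condition. If `u₀` is close enough to some `u⋆` with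
`G u⋆ = G u†`, then for any noisy data `y` with `‖y − G u†‖ ≤ η` and any sequence
obeying the regularizing LM recursion (normal equation with adjoint, residual reduced
by the factor `ρ`) there is a finite index `k` with `‖y − G (u k)‖ ≤ τ η`. -/
theorem stmt_0
    {X Y : Type*}
    [NormedAddCommGroup X] [InnerProductSpace ℝ X] [CompleteSpace X]
    [NormedAddCommGroup Y] [InnerProductSpace ℝ Y] [CompleteSpace Y]
    (G : X → Y) (DG : X → X →L[ℝ] Y) (u₀ : X) (r : ℝ) (hr : 0 < r)
    (B : Set X) (hB : B = closedBall u₀ (2 * r))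
    (hdiff : ∀ u ∈ B, HasFDerivWithinAt G (DG u) B u)
    (M : ℝ) (hM : 0 < M) (hbound : ∀ u ∈ B, ‖DG u‖ ≤ M)
    (c : ℝ) (hc : 0 < c)
    (htcc : ∀ u ∈ B, ∀ u' ∈ B,
      ‖G u - G u' - DG u (u - u')‖ ≤ c * ‖u - u'‖ * ‖G u - G u'‖)
    (ρ τ : ℝ) (hρ : ρ ∈ Set.Ioo (0 : ℝ) 1) (hτ : 1 / ρ < τ)
    (udag : X) :
    ∃ ε > 0, ∀ ustar : X, G ustar = G udag → ‖u₀ - ustar‖ ≤ ε →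
      ∀ η : ℝ, 0 < η → ∀ y : Y, ‖y - G udag‖ ≤ η →
        ∀ u : ℕ → X, u 0 = u₀ →
          (∀ m : ℕ, τ * η < ‖y - G (u m)‖ →
            ∃ (h : X) (α : ℝ), 0 < α ∧
              ((ContinuousLinearMap.adjoint (DG (u m))).comp (DG (u m))
                  + α • ContinuousLinearMap.id ℝ X) h
                = ContinuousLinearMap.adjoint (DG (u m)) (y - G (u m)) ∧
              ‖y - G (u m) - DG (u m) h‖ = ρ * ‖y - G (u m)‖ ∧
              u (m + 1) = u m + h) →
          ∃ k : ℕ, ‖y - G (u k)‖ ≤ τ * η := by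
  obtain ⟨hρ0, hρ1⟩ := hρ
  have hτ0 : 0 < τ := lt_trans (by positivity) hτ
  have hτρ : 1 < τ * ρ := by
    rw [div_lt_iff₀ hρ0] at hτ; linarith
  have hτinv : 1 / τ < ρ := by
    rw [div_lt_iff₀ hτ0]; linarith [mul_comm τ ρ]
  set δ : ℝ := (ρ - 1 / τ) / 2 with hδ_def
  have hδ : 0 < δ := by simp only [hδ_def]; linarith
  have h1τ : (0:ℝ) < 1 + 1 / τ := by positivity
  refine ⟨min r (δ / (c * (1 + 1 / τ))), lt_min hr (by positivity), ?_⟩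
  intro ustar hGstar hεstar η hη y hy u hu0 hrec
  set ε : ℝ := min r (δ / (c * (1 + 1 / τ))) with hε_def
  have hε0 : 0 < ε := lt_min hr (by positivity)
  have hεr : ε ≤ r := min_le_left _ _
  have hεδ : c * ε * (1 + 1 / τ) ≤ δ := by
    have h2 : ε ≤ δ / (c * (1 + 1 / τ)) := min_le_right _ _
    have h3 : 0 < c * (1 + 1 / τ) := by positivity
    calc c * ε * (1 + 1 / τ) = (c * (1 + 1 / τ)) * ε := by ring
      _ ≤ (c * (1 + 1 / τ)) * (δ / (c * (1 + 1 / τ))) := by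
          exact mul_le_mul_of_nonneg_left h2 (le_of_lt h3)
      _ = δ := by field_simp
  have hystar : ‖y - G ustar‖ ≤ η := by rw [hGstar]; exact hy
  by_contra hcon
  push_neg at hcon
  set γ : ℝ := 2 * δ * (1 - ρ) * (τ * η) ^ 2 / M ^ 2 with hγ_def
  have hγ0 : 0 < γ := by
    have h1ρ : 0 < 1 - ρ := by linarith
    have hτη : 0 < (τ * η) ^ 2 := by positivity
    exact div_pos (mul_pos (mul_pos (mul_pos two_pos hδ) h1ρ) hτη) (by positivity)
  -- the key one-step estimate
  have step : ∀ m : ℕ, ‖u m - ustar‖ ≤ ε →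
      ‖u (m + 1) - ustar‖ ^ 2 ≤ ‖u m - ustar‖ ^ 2 - γ := by
    intro m he
    have hbm : τ * η < ‖y - G (u m)‖ := hcon m
    obtain ⟨h, α, hα, hnormal, hdisc, hsucc⟩ := hrec m hbm
    set A := DG (u m) with hA_def
    set b : Y := y - G (u m) with hb_def
    set s : Y := b - A h with hs_def
    have hb_pos : 0 < ‖b‖ := lt_trans (by positivity) hbm
    have hs_norm : ‖s‖ = ρ * ‖b‖ := hdisc
    -- membership in the ball
    have humB : u m ∈ B := by
      rw [hB, mem_closedBall_iff_norm]
      calc ‖u m - u₀‖ = ‖(u m - ustar) - (u₀ - ustar)‖ := by abel_nf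
        _ ≤ ‖u m - ustar‖ + ‖u₀ - ustar‖ := norm_sub_le _ _
        _ ≤ ε + ε := add_le_add he hεstar
        _ ≤ 2 * r := by linarith
    have hustarB : ustar ∈ B := by
      rw [hB, mem_closedBall_iff_norm]
      calc ‖ustar - u₀‖ = ‖u₀ - ustar‖ := norm_sub_rev _ _
        _ ≤ ε := hεstar
        _ ≤ 2 * r := by linarith
    -- consequences of the normal equation
    have hαh : α • h = ContinuousLinearMap.adjoint A s := by
      have h1 : ContinuousLinearMap.adjoint A (A h) + α • h
          = ContinuousLinearMap.adjoint A b := by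
        have := hnormal
        simpa [ContinuousLinearMap.add_apply, ContinuousLinearMap.comp_apply,
          ContinuousLinearMap.smul_apply, ContinuousLinearMap.id_apply] using this
      rw [hs_def, map_sub]
      rw [← h1]; abel
    have hMA : ‖A‖ ≤ M := hbound _ humB
    -- the inner-product identity
    have hkey : α * ⟪u m - ustar + h, h⟫ = ⟪A (u m - ustar + h), s⟫ := by
      have h1 : ⟪u m - ustar + h, α • h⟫
          = ⟪u m - ustar + h, ContinuousLinearMap.adjoint A s⟫ := by rw [hαh]
      rwa [real_inner_smul_right, ContinuousLinearMap.adjoint_inner_right] at h1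
    -- decompose A (e + h)
    set w : Y := A (u m - ustar) - (G (u m) - G ustar) with hw_def
    have hsplit : A (u m - ustar + h) = w + (y - G ustar) - s := by
      rw [map_add, hw_def, hs_def, hb_def]; abel
    -- bounds
    have hw_norm : ‖w‖ ≤ c * ‖u m - ustar‖ * (‖b‖ + η) := by
      have h1 := htcc (u m) humB ustar hustarB
      have h2 : ‖w‖ = ‖G (u m) - G ustar - A (u m - ustar)‖ := by
        rw [hw_def, ← norm_neg]; congr 1; abel
      have h3 : ‖G (u m) - G ustar‖ ≤ ‖b‖ + η := by
        calc ‖G (u m) - G ustar‖ = ‖-(y - G (u m)) + (y - G ustar)‖ := by congr 1; abel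
          _ ≤ ‖-(y - G (u m))‖ + ‖y - G ustar‖ := norm_add_le _ _
          _ = ‖b‖ + ‖y - G ustar‖ := by rw [norm_neg, hb_def]
          _ ≤ ‖b‖ + η := by linarith
      rw [h2]
      calc ‖G (u m) - G ustar - A (u m - ustar)‖
          ≤ c * ‖u m - ustar‖ * ‖G (u m) - G ustar‖ := h1
        _ ≤ c * ‖u m - ustar‖ * (‖b‖ + η) := by
            apply mul_le_mul_of_nonneg_left h3; positivity
    -- the inner product is very negative
    have hinner : ⟪A (u m - ustar + h), s⟫ ≤ -(δ * ρ * ‖b‖ ^ 2) := by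
      have h1 : ⟪A (u m - ustar + h), s⟫
          = ⟪w, s⟫ + ⟪y - G ustar, s⟫ - ⟪s, s⟫ := by
        rw [hsplit, inner_sub_left, inner_add_left]
      have h2 : ⟪w, s⟫ ≤ (c * ε * (‖b‖ + η)) * ‖s‖ := by
        calc ⟪w, s⟫ ≤ ‖w‖ * ‖s‖ := real_inner_le_norm _ _
          _ ≤ (c * ‖u m - ustar‖ * (‖b‖ + η)) * ‖s‖ := by
              apply mul_le_mul_of_nonneg_right hw_norm (norm_nonneg _)
          _ ≤ (c * ε * (‖b‖ + η)) * ‖s‖ := by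
              apply mul_le_mul_of_nonneg_right _ (norm_nonneg _)
              have hbη : (0:ℝ) ≤ ‖b‖ + η := by linarith [norm_nonneg b]
              exact mul_le_mul_of_nonneg_right (mul_le_mul_of_nonneg_left he hc.le) hbη
      have h3 : ⟪y - G ustar, s⟫ ≤ η * ‖s‖ := by
        calc ⟪y - G ustar, s⟫ ≤ ‖y - G ustar‖ * ‖s‖ := real_inner_le_norm _ _
          _ ≤ η * ‖s‖ := mul_le_mul_of_nonneg_right hystar (norm_nonneg _)
      have h4 : ⟪s, s⟫ = ‖s‖ ^ 2 := real_inner_self_eq_norm_sq s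
      have hηb : τ * η ≤ ‖b‖ := le_of_lt hbm
      -- combine
      have h5 : c * ε * (‖b‖ + η) + η - ρ * ‖b‖ ≤ -(δ * ‖b‖) := by
        have hcε : c * ε * (1 + 1 / τ) ≤ δ := hεδ
        have hη' : η ≤ ‖b‖ / τ := by rw [le_div_iff₀ hτ0]; linarith [mul_comm η τ]
        have hb1 : ‖b‖ + η ≤ (1 + 1 / τ) * ‖b‖ := by
          have he1 : (1 + 1 / τ) * ‖b‖ = ‖b‖ + ‖b‖ / τ := by ring
          rw [he1]; linarith [hη']
        have hcε0 : 0 ≤ c * ε := by positivity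
        have h6 : c * ε * (‖b‖ + η) ≤ δ * ‖b‖ := by
          calc c * ε * (‖b‖ + η) ≤ c * ε * ((1 + 1 / τ) * ‖b‖) :=
                mul_le_mul_of_nonneg_left hb1 hcε0
            _ = (c * ε * (1 + 1 / τ)) * ‖b‖ := by ring
            _ ≤ δ * ‖b‖ := mul_le_mul_of_nonneg_right hcε hb_pos.le
        have h7 : η - ρ * ‖b‖ ≤ -(2 * δ) * ‖b‖ := by
          have : (1 / τ) * ‖b‖ - ρ * ‖b‖ = -(2 * δ) * ‖b‖ := by
            simp only [hδ_def]; ring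
          have h8 : η ≤ (1 / τ) * ‖b‖ := by
            rw [one_div, inv_mul_eq_div]; exact hη'
          linarith
        linarith
      calc ⟪A (u m - ustar + h), s⟫
          ≤ (c * ε * (‖b‖ + η)) * ‖s‖ + η * ‖s‖ - ‖s‖ ^ 2 := by rw [h1]; linarith
        _ = (c * ε * (‖b‖ + η) + η - ‖s‖) * ‖s‖ := by ring
        _ = (c * ε * (‖b‖ + η) + η - ρ * ‖b‖) * (ρ * ‖b‖) := by rw [hs_norm]
        _ ≤ (-(δ * ‖b‖)) * (ρ * ‖b‖) := by
            apply mul_le_mul_of_nonneg_right h5; positivity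
        _ = -(δ * ρ * ‖b‖ ^ 2) := by ring
    -- bound on α
    have hαle : α * (1 - ρ) ≤ M ^ 2 * ρ := by
      have hαb : α • b = A (ContinuousLinearMap.adjoint A s) + α • s := by
        rw [← hαh, map_smul, hs_def, hb_def]
        module
      have h1 : α * ‖b‖ ≤ (M ^ 2 + α) * (ρ * ‖b‖) := by
        have h2 : ‖A (ContinuousLinearMap.adjoint A s)‖ ≤ M ^ 2 * ‖s‖ := by
          have h3 : ‖ContinuousLinearMap.adjoint A s‖ ≤ M * ‖s‖ := by
            calc ‖ContinuousLinearMap.adjoint A s‖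
                ≤ ‖ContinuousLinearMap.adjoint A‖ * ‖s‖ :=
                  (ContinuousLinearMap.adjoint A).le_opNorm s
              _ ≤ M * ‖s‖ := by
                  apply mul_le_mul_of_nonneg_right _ (norm_nonneg _)
                  rw [(ContinuousLinearMap.adjoint (𝕜 := ℝ) (E := X) (F := Y)).norm_map A]
                  exact hMA
          calc ‖A (ContinuousLinearMap.adjoint A s)‖
              ≤ ‖A‖ * ‖ContinuousLinearMap.adjoint A s‖ := A.le_opNorm _
            _ ≤ M * (M * ‖s‖) := by
                apply mul_le_mul hMA h3 (norm_nonneg _) hM.le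
            _ = M ^ 2 * ‖s‖ := by ring
        calc α * ‖b‖ = ‖α • b‖ := by
              rw [norm_smul, Real.norm_eq_abs, abs_of_pos hα]
          _ ≤ ‖A (ContinuousLinearMap.adjoint A s)‖ + ‖α • s‖ := by
              rw [hαb]; exact norm_add_le _ _
          _ ≤ M ^ 2 * ‖s‖ + α * ‖s‖ := by
              rw [norm_smul, Real.norm_eq_abs, abs_of_pos hα]; linarith
          _ = (M ^ 2 + α) * ‖s‖ := by ring
          _ = (M ^ 2 + α) * (ρ * ‖b‖) := by rw [hs_norm]
      nlinarith [hb_pos]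
    -- the quantitative decrease
    have hdec : γ ≤ 2 * δ * ρ * ‖b‖ ^ 2 / α := by
      rw [hγ_def, div_le_div_iff₀ (by positivity) hα]
      have h1 : (τ * η) ^ 2 ≤ ‖b‖ ^ 2 := by nlinarith [hbm, (by positivity : (0:ℝ) < τ * η)]
      have h2 : (1 - ρ) * (τ * η) ^ 2 * α ≤ (M ^ 2 * ρ) * ‖b‖ ^ 2 := by
        calc (1 - ρ) * (τ * η) ^ 2 * α = (α * (1 - ρ)) * (τ * η) ^ 2 := by ring
          _ ≤ (M ^ 2 * ρ) * ‖b‖ ^ 2 := by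
              apply mul_le_mul hαle h1 (by positivity) (by positivity)
      nlinarith [hδ]
    -- put it together
    have hfin : ‖u (m + 1) - ustar‖ ^ 2
        ≤ ‖u m - ustar‖ ^ 2 - 2 * δ * ρ * ‖b‖ ^ 2 / α := by
      have heq : u (m + 1) - ustar = (u m - ustar) + h := by rw [hsucc]; abel
      have hinner2 : ⟪u m - ustar + h, h⟫ ≤ -(δ * ρ * ‖b‖ ^ 2) / α := by
        rw [le_div_iff₀ hα]
        nlinarith [hinner, hkey]
      have hexp : ‖(u m - ustar) + h‖ ^ 2
          = ‖u m - ustar‖ ^ 2 + 2 * ⟪u m - ustar + h, h⟫ - ‖h‖ ^ 2 := by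
        rw [@norm_add_sq_real X, inner_add_left, real_inner_self_eq_norm_sq]; ring
      rw [heq, hexp]
      have hh2 : (0:ℝ) ≤ ‖h‖ ^ 2 := by positivity
      have : -(δ * ρ * ‖b‖ ^ 2) / α = -(δ * ρ * ‖b‖ ^ 2 / α) := by ring
      rw [this] at hinner2
      have h9 : 2 * δ * ρ * ‖b‖ ^ 2 / α = 2 * (δ * ρ * ‖b‖ ^ 2 / α) := by ring
      linarith [h9.le]
    linarith
  -- invariant by induction
  have inv : ∀ m : ℕ, ‖u m - ustar‖ ≤ ε ∧ ‖u m - ustar‖ ^ 2 ≤ ε ^ 2 - m * γ := by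
    intro m
    induction m with
    | zero =>
        constructor
        · rw [hu0, ← norm_neg]; simpa [norm_sub_rev] using hεstar
        · have h1 : ‖u 0 - ustar‖ ≤ ε := by
            rw [hu0, ← norm_neg]; simpa [norm_sub_rev] using hεstar
          simp only [Nat.cast_zero, zero_mul, sub_zero]
          nlinarith [norm_nonneg (u 0 - ustar)]
    | succ n ih =>
        obtain ⟨ih1, ih2⟩ := ih
        have hs := step n ih1
        constructor
        · have h1 : ‖u (n + 1) - ustar‖ ^ 2 ≤ ε ^ 2 := by
            have : (0:ℝ) ≤ n * γ := by positivity
            linarith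
          nlinarith [norm_nonneg (u (n + 1) - ustar), hε0]
        · push_cast
          linarith
  obtain ⟨N, hN⟩ := exists_nat_gt (ε ^ 2 / γ)
  have h1 := (inv N).2
  have h2 : ε ^ 2 < N * γ := by
    rw [div_lt_iff₀ hγ0] at hN; linarith
  nlinarith [norm_nonneg (u N - ustar), h1, h2]
end

section
/- Let n, p be positive natural numbers, let Γ be an n×n real positive definite matrix, let C be a p×p real positive definite matrix, let A be an n×p real matrix, and let b ∈ ℝⁿ. Define, for α > 0, κ(α) = α² · ((A C Aᵀ + α Γ)⁻¹ b)ᵀ Γ ((A C Aᵀ + α Γ)⁻¹ b). Then κ is monotone nondecreasing on (0, ∞): for all 0 < α₁ ≤ α₂ one has κ(α₁) ≤ κ(α₂). -/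
open Matrix

private lemma dp_symm {m : ℕ} (M : Matrix (Fin m) (Fin m) ℝ) (hM : Mᵀ = M)
    (u v : Fin m → ℝ) : u ⬝ᵥ (M *ᵥ v) = v ⬝ᵥ (M *ᵥ u) := by
  rw [dotProduct_mulVec, ← mulVec_transpose, hM, dotProduct_comm]

private lemma dp_move {m q : ℕ} (A : Matrix (Fin m) (Fin q) ℝ)
    (h : Fin q → ℝ) (w : Fin m → ℝ) :
    (A *ᵥ h) ⬝ᵥ w = h ⬝ᵥ (Aᵀ *ᵥ w) := by
  rw [dotProduct_comm, dotProduct_mulVec, ← mulVec_transpose, dotProduct_comm]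

private lemma quad_sub {m : ℕ} (M : Matrix (Fin m) (Fin m) ℝ) (hM : Mᵀ = M)
    (u v : Fin m → ℝ) :
    (u - v) ⬝ᵥ (M *ᵥ (u - v)) =
      u ⬝ᵥ (M *ᵥ u) - 2 * (u ⬝ᵥ (M *ᵥ v)) + v ⬝ᵥ (M *ᵥ v) := by
  have hsw : v ⬝ᵥ (M *ᵥ u) = u ⬝ᵥ (M *ᵥ v) := dp_symm M hM v u
  simp only [mulVec_sub, dotProduct_sub, sub_dotProduct, hsw]
  ring

private lemma quad_add {m : ℕ} (M : Matrix (Fin m) (Fin m) ℝ) (hM : Mᵀ = M)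
    (u v : Fin m → ℝ) :
    (u + v) ⬝ᵥ (M *ᵥ (u + v)) =
      u ⬝ᵥ (M *ᵥ u) + 2 * (u ⬝ᵥ (M *ᵥ v)) + v ⬝ᵥ (M *ᵥ v) := by
  have hsw : v ⬝ᵥ (M *ᵥ u) = u ⬝ᵥ (M *ᵥ v) := dp_symm M hM v u
  simp only [mulVec_add, dotProduct_add, add_dotProduct, hsw]
  ring

/-- The function `κ(α) = α² ((ACAᵀ+αΓ)⁻¹ b)ᵀ Γ ((ACAᵀ+αΓ)⁻¹ b)` is monotone
nondecreasing on `(0, ∞)`. -/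
theorem stmt_6 {n p : ℕ} (hn : 0 < n) (hp : 0 < p)
    (Γ : Matrix (Fin n) (Fin n) ℝ) (C : Matrix (Fin p) (Fin p) ℝ)
    (A : Matrix (Fin n) (Fin p) ℝ)
    (hΓ : Γ.PosDef) (hC : C.PosDef)
    (b : Fin n → ℝ)
    (κ : ℝ → ℝ)
    (hκ : ∀ α, κ α = α ^ 2 *
      (((A * C * Aᵀ + α • Γ)⁻¹ *ᵥ b) ⬝ᵥ (Γ *ᵥ ((A * C * Aᵀ + α • Γ)⁻¹ *ᵥ b)))) :
    ∀ α₁ α₂ : ℝ, 0 < α₁ → α₁ ≤ α₂ → κ α₁ ≤ κ α₂ := by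
  -- symmetry and positivity facts
  have hΓs : Γᵀ = Γ := by simpa using hΓ.1.eq
  have hΓis : (Γ⁻¹)ᵀ = Γ⁻¹ := by simpa using hΓ.inv.1.eq
  have hCis : (C⁻¹)ᵀ = C⁻¹ := by simpa using hC.inv.1.eq
  have hΓi : (Γ⁻¹).PosSemidef := hΓ.inv.posSemidef
  have hCi : (C⁻¹).PosSemidef := hC.inv.posSemidef
  have hM : (A * C * Aᵀ).PosSemidef := by
    simpa using hC.posSemidef.mul_mul_conjTranspose_same A
  -- key: variational characterization of κ
  have key : ∀ α : ℝ, 0 < α → ∃ x : Fin p → ℝ,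
      κ α = (b - A *ᵥ x) ⬝ᵥ (Γ⁻¹ *ᵥ (b - A *ᵥ x)) ∧
      ∀ y : Fin p → ℝ,
        (b - A *ᵥ x) ⬝ᵥ (Γ⁻¹ *ᵥ (b - A *ᵥ x)) + α * (x ⬝ᵥ (C⁻¹ *ᵥ x)) ≤
        (b - A *ᵥ y) ⬝ᵥ (Γ⁻¹ *ᵥ (b - A *ᵥ y)) + α * (y ⬝ᵥ (C⁻¹ *ᵥ y)) := by
    intro α hα
    have hαΓ : (α • Γ).PosDef := by
      rw [posDef_iff_dotProduct_mulVec]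
      constructor
      · show (α • Γ)ᴴ = α • Γ
        rw [conjTranspose_smul, hΓ.1.eq, star_trivial]
      · intro x hx
        have h1 := hΓ.dotProduct_mulVec_pos hx
        simp only [smul_mulVec, dotProduct_smul, smul_eq_mul,
          star_trivial] at h1 ⊢
        positivity
    have hS : (A * C * Aᵀ + α • Γ).PosDef := Matrix.PosDef.posSemidef_add hM hαΓ
    set S := A * C * Aᵀ + α • Γ with hSdef
    set w : Fin n → ℝ := S⁻¹ *ᵥ b with hwdef
    have hSw : S *ᵥ w = b := by
      rw [hwdef, mulVec_mulVec, mul_nonsing_inv _ hS.det_pos.ne'.isUnit, one_mulVec]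
    set x : Fin p → ℝ := C *ᵥ (Aᵀ *ᵥ w) with hxdef
    -- residual identity
    have hres : b - A *ᵥ x = α • (Γ *ᵥ w) := by
      have h1 : A *ᵥ x = (A * C * Aᵀ) *ᵥ w := by
        rw [hxdef, ← mulVec_mulVec, ← mulVec_mulVec]
      have h2 : (A * C * Aᵀ) *ᵥ w + (α • Γ) *ᵥ w = b := by
        rw [← add_mulVec, ← hSdef, hSw]
      rw [h1, ← smul_mulVec, sub_eq_iff_eq_add', ← h2]
    have hΓiw : Γ⁻¹ *ᵥ (α • (Γ *ᵥ w)) = α • w := by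
      rw [mulVec_smul, mulVec_mulVec, nonsing_inv_mul _ hΓ.det_pos.ne'.isUnit,
        one_mulVec]
    have hCix : C⁻¹ *ᵥ x = Aᵀ *ᵥ w := by
      rw [hxdef, mulVec_mulVec, nonsing_inv_mul _ hC.det_pos.ne'.isUnit, one_mulVec]
    refine ⟨x, ?_, ?_⟩
    · -- κ α equals the residual term
      rw [hκ, ← hSdef, ← hwdef, hres, hΓiw, smul_dotProduct, dotProduct_smul,
        smul_eq_mul, smul_eq_mul, dotProduct_comm (Γ *ᵥ w) w]
      ring
    · -- minimality
      intro y
      set h : Fin p → ℝ := y - x with hhdef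
      have hy : y = x + h := by rw [hhdef]; abel
      have hby : b - A *ᵥ y = (b - A *ᵥ x) - A *ᵥ h := by
        rw [hy, mulVec_add]; abel
      have hcross : (b - A *ᵥ x) ⬝ᵥ (Γ⁻¹ *ᵥ (A *ᵥ h)) = α * (h ⬝ᵥ (Aᵀ *ᵥ w)) := by
        rw [dp_symm _ hΓis, hres, hΓiw, dotProduct_smul, smul_eq_mul, dp_move]
      have hcross2 : x ⬝ᵥ (C⁻¹ *ᵥ h) = h ⬝ᵥ (Aᵀ *ᵥ w) := by
        rw [dp_symm _ hCis, hCix]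
      have hR : (b - A *ᵥ y) ⬝ᵥ (Γ⁻¹ *ᵥ (b - A *ᵥ y)) =
          (b - A *ᵥ x) ⬝ᵥ (Γ⁻¹ *ᵥ (b - A *ᵥ x))
          - 2 * (α * (h ⬝ᵥ (Aᵀ *ᵥ w)))
          + (A *ᵥ h) ⬝ᵥ (Γ⁻¹ *ᵥ (A *ᵥ h)) := by
        rw [hby, quad_sub _ hΓis, hcross]
      have hP : y ⬝ᵥ (C⁻¹ *ᵥ y) =
          x ⬝ᵥ (C⁻¹ *ᵥ x) + 2 * (h ⬝ᵥ (Aᵀ *ᵥ w)) + h ⬝ᵥ (C⁻¹ *ᵥ h) := by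
        rw [hy, quad_add _ hCis, hcross2]
      have hnn1 : 0 ≤ (A *ᵥ h) ⬝ᵥ (Γ⁻¹ *ᵥ (A *ᵥ h)) := by simpa using hΓi.dotProduct_mulVec_nonneg (A *ᵥ h)
      have hnn2 : 0 ≤ h ⬝ᵥ (C⁻¹ *ᵥ h) := by simpa using hCi.dotProduct_mulVec_nonneg h
      rw [hR, hP]
      nlinarith [mul_nonneg hα.le hnn2]
  -- comparison argument
  intro α₁ α₂ hα₁ hle
  have hα₂ : 0 < α₂ := lt_of_lt_of_le hα₁ hle
  rcases eq_or_lt_of_le hle with rfl | hlt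
  · exact le_refl _
  obtain ⟨x₁, hk1, hmin1⟩ := key α₁ hα₁
  obtain ⟨x₂, hk2, hmin2⟩ := key α₂ hα₂
  have i1 := hmin1 x₂
  have i2 := hmin2 x₁
  rw [hk1, hk2]
  nlinarith [mul_le_mul_of_nonneg_left i1 hα₂.le, mul_le_mul_of_nonneg_left i2 hα₁.le]
end

section
/- Let n, p be positive natural numbers, let Γ be an n×n real positive definite matrix, let C be a p×p real positive definite matrix, let A be an n×p real matrix, and let b ∈ ℝⁿ. Define, for α > 0, κ(α) = α² · ((A C Aᵀ + α Γ)⁻¹ b)ᵀ Γ ((A C Aᵀ + α Γ)⁻¹ b). Then for every α > 0 one has κ(α) ≤ bᵀ Γ⁻¹ b. -/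
open Matrix

/-- The weighted squared linearized residual
`κ(α) = α² ((ACAᵀ+αΓ)⁻¹ b)ᵀ Γ ((ACAᵀ+αΓ)⁻¹ b)` never exceeds the weighted squared
norm `bᵀ Γ⁻¹ b` of the data residual. -/
theorem stmt_8 {n p : ℕ} (hn : 0 < n) (hp : 0 < p)
    (Γ : Matrix (Fin n) (Fin n) ℝ) (C : Matrix (Fin p) (Fin p) ℝ)
    (A : Matrix (Fin n) (Fin p) ℝ)
    (hΓ : Γ.PosDef) (hC : C.PosDef)
    (b : Fin n → ℝ)
    (κ : ℝ → ℝ)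
    (hκ : ∀ α, κ α = α ^ 2 *
      (((A * C * Aᵀ + α • Γ)⁻¹ *ᵥ b) ⬝ᵥ (Γ *ᵥ ((A * C * Aᵀ + α • Γ)⁻¹ *ᵥ b)))) :
    ∀ α : ℝ, 0 < α → κ α ≤ b ⬝ᵥ (Γ⁻¹ *ᵥ b) := by
  intro α hα
  have hAt : Aᴴ = Aᵀ := by ext i j; simp [conjTranspose_apply]
  set S : Matrix (Fin n) (Fin n) ℝ := A * C * Aᵀ with hSdef
  have hS : S.PosSemidef := by
    have := hC.posSemidef.mul_mul_conjTranspose_same A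
    rwa [hAt] at this
  have hsm : (α • Γ).PosDef := by
    have hherm : (α • Γ).IsHermitian := by
      unfold Matrix.IsHermitian
      rw [conjTranspose_smul, hΓ.1.eq]
      simp
    refine Matrix.PosDef.of_dotProduct_mulVec_pos hherm (fun x hx => ?_)
    rw [smul_mulVec, dotProduct_smul, smul_eq_mul]
    exact mul_pos hα (hΓ.dotProduct_mulVec_pos hx)
  have hM : (S + α • Γ).PosDef := Matrix.PosDef.posSemidef_add hS hsm
  set M : Matrix (Fin n) (Fin n) ℝ := S + α • Γ with hMdef
  set v : Fin n → ℝ := M⁻¹ *ᵥ b with hvdef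
  have hMdet : IsUnit M.det := hM.det_pos.ne'.isUnit
  have hb : M *ᵥ v = b := by
    rw [hvdef, mulVec_mulVec, Matrix.mul_nonsing_inv _ hMdet, one_mulVec]
  have hΓdet : IsUnit Γ.det := hΓ.det_pos.ne'.isUnit
  -- symmetry
  have hMsymm : Mᵀ = M := hM.isHermitian
  have hSsymm : Sᴴ = S := hS.isHermitian
  -- expansion of M Γ⁻¹ M
  have hexp : M * Γ⁻¹ * M = S * Γ⁻¹ * S + (2 * α) • S + (α ^ 2) • Γ := by
    rw [hMdef]
    have h1 : Γ * Γ⁻¹ = 1 := Matrix.mul_nonsing_inv _ hΓdet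
    have h2 : Γ⁻¹ * Γ = 1 := Matrix.nonsing_inv_mul _ hΓdet
    rw [add_mul, add_mul, mul_add, mul_add]
    have e1 : S * Γ⁻¹ * (α • Γ) = α • S := by
      rw [Matrix.mul_smul, Matrix.mul_assoc, h2, Matrix.mul_one]
    have e2 : α • Γ * Γ⁻¹ * S = α • S := by
      rw [Matrix.smul_mul, Matrix.smul_mul, h1, Matrix.one_mul]
    have e3 : α • Γ * Γ⁻¹ * (α • Γ) = (α ^ 2) • Γ := by
      rw [Matrix.smul_mul, Matrix.smul_mul, h1, Matrix.mul_smul, Matrix.one_mul,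
        smul_smul, sq]
    rw [e1, e2, e3, two_mul, add_smul]
    abel
  -- rewrite RHS
  have key : ∀ (N P : Matrix (Fin n) (Fin n) ℝ) (x : Fin n → ℝ),
      x ⬝ᵥ ((Nᵀ * P * N) *ᵥ x) = (N *ᵥ x) ⬝ᵥ (P *ᵥ (N *ᵥ x)) := by
    intro N P x
    rw [← mulVec_mulVec, ← mulVec_mulVec, dotProduct_mulVec x Nᵀ, vecMul_transpose]
  have hRHS : b ⬝ᵥ (Γ⁻¹ *ᵥ b) = v ⬝ᵥ ((M * Γ⁻¹ * M) *ᵥ v) := by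
    conv_lhs => rw [← hb]
    rw [← key M Γ⁻¹ v, hMsymm]
  have hpsd1 : 0 ≤ v ⬝ᵥ ((S * Γ⁻¹ * S) *ᵥ v) := by
    have h := (hΓ.inv.posSemidef.conjTranspose_mul_mul_same S).dotProduct_mulVec_nonneg v
    rwa [hSsymm, star_trivial] at h
  have hpsd2 : 0 ≤ v ⬝ᵥ (S *ᵥ v) := by
    have h := hS.dotProduct_mulVec_nonneg v
    rwa [star_trivial] at h
  rw [hκ, hRHS, hexp, add_mulVec, add_mulVec, dotProduct_add, dotProduct_add,
    smul_mulVec, smul_mulVec, dotProduct_smul, dotProduct_smul,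
    smul_eq_mul, smul_eq_mul]
  nlinarith [hpsd1, hpsd2]
end

section
/- Let n, p be positive natural numbers, let Γ be an n×n real positive definite matrix, let C be a p×p real positive definite matrix, let A be an n×p real matrix, and let b ∈ ℝⁿ. Define, for α > 0, κ(α) = α² · ((A C Aᵀ + α Γ)⁻¹ b)ᵀ Γ ((A C Aᵀ + α Γ)⁻¹ b). Then κ(α) tends to bᵀ Γ⁻¹ b as α → ∞ (i.e., the limit of κ along the filter at infinity on (0,∞) equals bᵀΓ⁻¹b). -/
open Matrix Filter

/-- The weighted squared linearized residual
`κ(α) = α² ((ACAᵀ+αΓ)⁻¹ b)ᵀ Γ ((ACAᵀ+αΓ)⁻¹ b)` tends to `bᵀ Γ⁻¹ b` as `α → ∞`. -/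
theorem stmt_9 {n p : ℕ} (hn : 0 < n) (hp : 0 < p)
    (Γ : Matrix (Fin n) (Fin n) ℝ) (C : Matrix (Fin p) (Fin p) ℝ)
    (A : Matrix (Fin n) (Fin p) ℝ)
    (hΓ : Γ.PosDef) (hC : C.PosDef)
    (b : Fin n → ℝ)
    (κ : ℝ → ℝ)
    (hκ : ∀ α, κ α = α ^ 2 *
      (((A * C * Aᵀ + α • Γ)⁻¹ *ᵥ b) ⬝ᵥ (Γ *ᵥ ((A * C * Aᵀ + α • Γ)⁻¹ *ᵥ b)))) :
    Tendsto κ atTop (nhds (b ⬝ᵥ (Γ⁻¹ *ᵥ b))) := by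
  set S : Matrix (Fin n) (Fin n) ℝ := A * C * Aᵀ with hSdef
  have hS : S.PosSemidef := by
    have := hC.posSemidef.mul_mul_conjTranspose_same A
    simpa [hSdef, Matrix.conjTranspose_eq_transpose_of_trivial, Matrix.mul_assoc] using this
  -- the rescaled matrix
  set M : ℝ → Matrix (Fin n) (Fin n) ℝ := fun α => α⁻¹ • S + Γ with hMdef
  have hdet : Γ.det ≠ 0 := hΓ.det_pos.ne'
  -- continuity of inversion at Γ
  have hinvC : ContinuousAt Inv.inv Γ := by
    apply continuousAt_matrix_inv
    rw [Ring.inverse_eq_inv']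
    exact continuousAt_inv₀ hdet
  -- M α → Γ
  have hMt : Tendsto M atTop (nhds Γ) := by
    have h1 : Tendsto (fun α : ℝ => α⁻¹ • S) atTop
        (nhds ((0 : ℝ) • S)) := tendsto_inv_atTop_zero.smul_const S
    have := h1.add_const Γ
    simpa [hMdef] using this
  have hinvT : Tendsto (fun α => (M α)⁻¹) atTop (nhds Γ⁻¹) :=
    hinvC.tendsto.comp hMt
  -- the continuous quadratic functional
  have hg : Continuous fun N : Matrix (Fin n) (Fin n) ℝ =>
      (N *ᵥ b) ⬝ᵥ (Γ *ᵥ (N *ᵥ b)) := by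
    have h1 : Continuous fun N : Matrix (Fin n) (Fin n) ℝ => N *ᵥ b :=
      continuous_id.matrix_mulVec continuous_const
    exact h1.dotProduct (continuous_const.matrix_mulVec h1)
  have hGT : Tendsto (fun α => ((M α)⁻¹ *ᵥ b) ⬝ᵥ (Γ *ᵥ ((M α)⁻¹ *ᵥ b)))
      atTop (nhds ((Γ⁻¹ *ᵥ b) ⬝ᵥ (Γ *ᵥ (Γ⁻¹ *ᵥ b)))) :=
    (hg.tendsto _).comp hinvT
  -- the limit value simplifies
  have hval : (Γ⁻¹ *ᵥ b) ⬝ᵥ (Γ *ᵥ (Γ⁻¹ *ᵥ b)) = b ⬝ᵥ (Γ⁻¹ *ᵥ b) := by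
    rw [Matrix.mulVec_mulVec, Matrix.mul_nonsing_inv Γ (isUnit_iff_ne_zero.mpr hdet),
      Matrix.one_mulVec, dotProduct_comm]
  rw [← hval]
  -- eventual equality of κ with the rescaled expression
  refine hGT.congr' ?_
  filter_upwards [eventually_gt_atTop (0 : ℝ)] with α hα
  have hα' : α ≠ 0 := hα.ne'
  have hMpd : (M α).PosDef := by
    have hherm : (M α).IsHermitian := by
      simp [hMdef, Matrix.IsHermitian, Matrix.conjTranspose_add, Matrix.conjTranspose_smul,
        hS.isHermitian.eq, hΓ.isHermitian.eq]
      rw [← Matrix.conjTranspose_eq_transpose_of_trivial S,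
        ← Matrix.conjTranspose_eq_transpose_of_trivial Γ, hS.isHermitian.eq, hΓ.isHermitian.eq]
    refine Matrix.PosDef.of_dotProduct_mulVec_pos hherm fun x hx => ?_
    have hstar : star x = x := funext fun i => rfl
    simp only [hMdef, Matrix.add_mulVec, dotProduct_add, Matrix.smul_mulVec,
      dotProduct_smul, smul_eq_mul, hstar]
    have h1 := hS.dotProduct_mulVec_nonneg x
    have h2 := hΓ.dotProduct_mulVec_pos hx
    rw [hstar] at h1 h2
    exact add_pos_of_nonneg_of_pos (mul_nonneg (inv_nonneg.mpr hα.le) h1) h2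
  have hMdet : IsUnit (M α).det := isUnit_iff_ne_zero.mpr hMpd.det_pos.ne'
  have hSplit : S + α • Γ = α • M α := by
    simp [hMdef, smul_add, smul_smul, mul_inv_cancel₀ hα']
  haveI : Invertible α := invertibleOfNonzero hα'
  have hinv2 : (S + α • Γ)⁻¹ = α⁻¹ • (M α)⁻¹ := by
    rw [hSplit, Matrix.inv_smul (A := M α) α hMdet, invOf_eq_inv]
  rw [hκ α, hinv2, Matrix.smul_mulVec, smul_dotProduct, Matrix.mulVec_smul,
    dotProduct_smul, smul_eq_mul, smul_eq_mul]
  field_simp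
end

section
/- Let n, p be positive natural numbers, let Γ be an n×n real positive definite matrix, let C be a p×p real positive definite matrix, let A be an n×p real matrix, and let b ∈ ℝⁿ with b ≠ 0. Define, for α > 0, κ(α) = α² · ((A C Aᵀ + α Γ)⁻¹ b)ᵀ Γ ((A C Aᵀ + α Γ)⁻¹ b). Then for every ρ ∈ (0,1) and every initial guess α₀ > 0, there exists a natural number J such that κ(2^J · α₀) ≥ ρ² · bᵀ Γ⁻¹ b. -/
open Matrix

private lemma smul_posSemidef {m : ℕ} {M : Matrix (Fin m) (Fin m) ℝ}
    (hM : M.PosSemidef) {c : ℝ} (hc : 0 ≤ c) : (c • M).PosSemidef := by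
  refine .of_dotProduct_mulVec_nonneg ?_ (fun x => ?_)
  · unfold Matrix.IsHermitian
    rw [conjTranspose_smul, hM.isHermitian.eq]
    simp
  · rw [smul_mulVec, dotProduct_smul, smul_eq_mul]
    exact mul_nonneg hc (hM.dotProduct_mulVec_nonneg x)

/-- Termination of the doubling search: if `b ≠ 0`, then for every `ρ ∈ (0,1)` and
every initial guess `α₀ > 0` there is a natural number `J` with
`κ(2^J α₀) ≥ ρ² bᵀ Γ⁻¹ b`. -/
theorem stmt_10 {n p : ℕ} (hn : 0 < n) (hp : 0 < p)
    (Γ : Matrix (Fin n) (Fin n) ℝ) (C : Matrix (Fin p) (Fin p) ℝ)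
    (A : Matrix (Fin n) (Fin p) ℝ)
    (hΓ : Γ.PosDef) (hC : C.PosDef)
    (b : Fin n → ℝ) (hb : b ≠ 0)
    (κ : ℝ → ℝ)
    (hκ : ∀ α, κ α = α ^ 2 *
      (((A * C * Aᵀ + α • Γ)⁻¹ *ᵥ b) ⬝ᵥ (Γ *ᵥ ((A * C * Aᵀ + α • Γ)⁻¹ *ᵥ b)))) :
    ∀ ρ : ℝ, ρ ∈ Set.Ioo (0 : ℝ) 1 → ∀ α₀ : ℝ, 0 < α₀ →
      ∃ J : ℕ, ρ ^ 2 * (b ⬝ᵥ (Γ⁻¹ *ᵥ b)) ≤ κ ((2 : ℝ) ^ J * α₀) := by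
  intro ρ hρ α₀ hα₀
  set M : Matrix (Fin n) (Fin n) ℝ := A * C * Aᵀ with hM
  have hMps : M.PosSemidef := by
    have := hC.posSemidef.mul_mul_conjTranspose_same A
    simpa [hM] using this
  -- positive definiteness of ε • M + Γ for ε ≥ 0
  have hpos : ∀ ε : ℝ, 0 ≤ ε → (ε • M + Γ).PosDef := fun ε hε =>
    Matrix.PosDef.posSemidef_add (smul_posSemidef hMps hε) hΓ
  -- the auxiliary function
  set F : ℝ → ℝ := fun ε =>
    ((ε • M + Γ)⁻¹ *ᵥ b) ⬝ᵥ (Γ *ᵥ ((ε • M + Γ)⁻¹ *ᵥ b)) with hF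
  -- value at 0
  have hF0 : F 0 = b ⬝ᵥ (Γ⁻¹ *ᵥ b) := by
    have h1 : Γ *ᵥ (Γ⁻¹ *ᵥ b) = b := by
      rw [mulVec_mulVec, Matrix.mul_nonsing_inv _ hΓ.det_pos.ne'.isUnit, one_mulVec]
    simp only [hF, zero_smul, zero_add, h1]
    exact dotProduct_comm _ _
  -- κ α = F α⁻¹ for α > 0
  have hκF : ∀ α : ℝ, 0 < α → κ α = F α⁻¹ := by
    intro α hα
    have hαinv : (0:ℝ) ≤ α⁻¹ := (inv_pos.mpr hα).le
    set N : Matrix (Fin n) (Fin n) ℝ := α⁻¹ • M + Γ with hN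
    have hNdet : IsUnit N.det := (hpos _ hαinv).det_pos.ne'.isUnit
    have hsplit : M + α • Γ = α • N := by
      rw [hN, smul_add, smul_smul, mul_inv_cancel₀ hα.ne', one_smul]
    have hinv : (M + α • Γ)⁻¹ = α⁻¹ • N⁻¹ := by
      apply Matrix.inv_eq_right_inv
      rw [hsplit, Matrix.smul_mul, Matrix.mul_smul, smul_smul,
        mul_inv_cancel₀ hα.ne', one_smul, Matrix.mul_nonsing_inv _ hNdet]
    rw [hκ, hinv]
    simp only [hF, hN, smul_mulVec, mulVec_smul, smul_dotProduct, dotProduct_smul,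
      smul_eq_mul]
    field_simp
  -- positivity of the limit
  have hL : 0 < b ⬝ᵥ (Γ⁻¹ *ᵥ b) := by
    have := hΓ.inv.dotProduct_mulVec_pos hb
    simpa using this
  -- continuity of F at 0
  have hcont : ContinuousAt F 0 := by
    have hmat : Continuous fun ε : ℝ => ε • M + Γ := by continuity
    have hinvdet : ContinuousAt Ring.inverse Γ.det := by
      obtain ⟨u, hu⟩ := hΓ.det_pos.ne'.isUnit
      simpa [hu] using NormedRing.inverse_continuousAt u
    have hinvc : ContinuousAt (fun ε : ℝ => (ε • M + Γ)⁻¹) 0 := by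
      have h2 : ContinuousAt Inv.inv ((0:ℝ) • M + Γ) := by
        simp only [zero_smul, zero_add]
        exact continuousAt_matrix_inv Γ hinvdet
      exact ContinuousAt.comp (x := (0:ℝ)) (f := fun ε : ℝ => ε • M + Γ)
        (g := Inv.inv) h2 hmat.continuousAt
    have houter : Continuous fun v : Fin n → ℝ => v ⬝ᵥ (Γ *ᵥ v) :=
      continuous_id.dotProduct (continuous_const.matrix_mulVec continuous_id)
    have hmv : Continuous fun N : Matrix (Fin n) (Fin n) ℝ => N *ᵥ b :=
      continuous_id.matrix_mulVec continuous_const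
    exact (houter.continuousAt.comp ((hmv.continuousAt).comp hinvc))
  -- main limit argument
  have htend : Filter.Tendsto (fun J : ℕ => F (((2:ℝ) ^ J * α₀)⁻¹))
      Filter.atTop (nhds (F 0)) := by
    apply hcont.tendsto.comp
    have : Filter.Tendsto (fun J : ℕ => (2:ℝ) ^ J * α₀) Filter.atTop Filter.atTop :=
      (tendsto_pow_atTop_atTop_of_one_lt (by norm_num)).atTop_mul_const hα₀
    exact tendsto_inv_atTop_zero.comp this
  rw [hF0] at htend
  have hρ2 : ρ ^ 2 < 1 := pow_lt_one₀ hρ.1.le hρ.2 two_ne_zero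
  have hlt : ρ ^ 2 * (b ⬝ᵥ (Γ⁻¹ *ᵥ b)) < b ⬝ᵥ (Γ⁻¹ *ᵥ b) := by
    nlinarith
  have hev := htend.eventually (eventually_gt_nhds hlt)
  obtain ⟨J, hJ⟩ := hev.exists
  refine ⟨J, ?_⟩
  have hαJ : 0 < (2:ℝ) ^ J * α₀ := by positivity
  rw [hκF _ hαJ]
  exact hJ.le
end

section
/- Let n, p be positive natural numbers, let Γ be an n×n real positive definite matrix, let C be a p×p real positive definite matrix, let A be an n×p real matrix, and let b ∈ ℝⁿ with b ≠ 0. Define, for α > 0, κ(α) = α² · ((A C Aᵀ + α Γ)⁻¹ b)ᵀ Γ ((A C Aᵀ + α Γ)⁻¹ b). Let ρ ∈ (0,1) and suppose there exists α₁ > 0 with κ(α₁) ≤ ρ² · bᵀ Γ⁻¹ b. Then there exists α⋆ > 0 with κ(α⋆) = ρ² · bᵀ Γ⁻¹ b. -/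
open Matrix

section aux
variable {n : ℕ}

lemma posDef_smul {M : Matrix (Fin n) (Fin n) ℝ} (hM : M.PosDef) {c : ℝ} (hc : 0 < c) :
    (c • M).PosDef := by
  refine Matrix.PosDef.of_dotProduct_mulVec_pos ?_ (fun x hx => ?_)
  · unfold Matrix.IsHermitian
    rw [conjTranspose_smul, hM.isHermitian.eq]
    simp
  · rw [smul_mulVec, dotProduct_smul]
    exact mul_pos hc (hM.dotProduct_mulVec_pos hx)

lemma posSemidef_smul {M : Matrix (Fin n) (Fin n) ℝ} (hM : M.PosSemidef) {c : ℝ} (hc : 0 ≤ c) :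
    (c • M).PosSemidef := by
  refine Matrix.PosSemidef.of_dotProduct_mulVec_nonneg ?_ (fun x => ?_)
  · unfold Matrix.IsHermitian
    rw [conjTranspose_smul, hM.isHermitian.eq]
    simp
  · rw [smul_mulVec, dotProduct_smul]
    exact mul_nonneg hc (hM.dotProduct_mulVec_nonneg x)

end aux

/-- If `b ≠ 0`, `ρ ∈ (0,1)`, and there exists `α₁ > 0` with `κ(α₁) ≤ ρ² bᵀΓ⁻¹b`,
then there exists `α⋆ > 0` with `κ(α⋆) = ρ² bᵀΓ⁻¹b`. -/
theorem stmt_11 {n p : ℕ} (hn : 0 < n) (hp : 0 < p)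
    (Γ : Matrix (Fin n) (Fin n) ℝ) (C : Matrix (Fin p) (Fin p) ℝ)
    (A : Matrix (Fin n) (Fin p) ℝ)
    (hΓ : Γ.PosDef) (hC : C.PosDef)
    (b : Fin n → ℝ) (hb : b ≠ 0)
    (κ : ℝ → ℝ)
    (hκ : ∀ α, κ α = α ^ 2 *
      (((A * C * Aᵀ + α • Γ)⁻¹ *ᵥ b) ⬝ᵥ (Γ *ᵥ ((A * C * Aᵀ + α • Γ)⁻¹ *ᵥ b))))
    (ρ : ℝ) (hρ : ρ ∈ Set.Ioo (0 : ℝ) 1)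
    (α₁ : ℝ) (hα₁ : 0 < α₁) (hle : κ α₁ ≤ ρ ^ 2 * (b ⬝ᵥ (Γ⁻¹ *ᵥ b))) :
    ∃ αstar : ℝ, 0 < αstar ∧ κ αstar = ρ ^ 2 * (b ⬝ᵥ (Γ⁻¹ *ᵥ b)) := by
  classical
  set S : Matrix (Fin n) (Fin n) ℝ := A * C * Aᵀ with hS
  have hSps : S.PosSemidef := by
    have := hC.posSemidef.mul_mul_conjTranspose_same A
    rwa [conjTranspose_eq_transpose_of_trivial] at this
  set B : ℝ := b ⬝ᵥ (Γ⁻¹ *ᵥ b) with hBdef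
  have hBpos : 0 < B := by
    have := hΓ.inv.dotProduct_mulVec_pos hb
    simpa [hBdef] using this
  set F : Matrix (Fin n) (Fin n) ℝ → ℝ :=
    fun X => (X *ᵥ b) ⬝ᵥ (Γ *ᵥ (X *ᵥ b)) with hF
  have hFcont : Continuous F := by
    apply Continuous.dotProduct
    · exact continuous_id.matrix_mulVec continuous_const
    · exact continuous_const.matrix_mulVec (continuous_id.matrix_mulVec continuous_const)
  have hMpd : ∀ α : ℝ, 0 < α → (S + α • Γ).PosDef :=
    fun α hα => Matrix.PosDef.posSemidef_add hSps (posDef_smul hΓ hα)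
  have hMcont : Continuous fun α : ℝ => S + α • Γ :=
    continuous_const.add (continuous_id.smul continuous_const)
  have hκcont : ContinuousOn κ (Set.Ioi 0) := by
    intro α hα
    have hdet : ((S + α • Γ).det) ≠ 0 := (hMpd α hα).det_pos.ne'
    have hinv : ContinuousAt Inv.inv (S + α • Γ) := by
      apply continuousAt_matrix_inv
      rw [Ring.inverse_eq_inv']
      exact continuousAt_inv₀ hdet
    have hMca : ContinuousAt (fun β : ℝ => S + β • Γ) α := hMcont.continuousAt
    have h1 : ContinuousAt (fun β : ℝ => (S + β • Γ)⁻¹) α := ContinuousAt.comp (f := fun β : ℝ => S + β • Γ) hinv hMca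
    have h2 : ContinuousAt (fun β : ℝ => β ^ 2 * F ((S + β • Γ)⁻¹)) α :=
      ContinuousAt.mul (by fun_prop) (hFcont.continuousAt.comp h1)
    have hfe : κ = fun β : ℝ => β ^ 2 * F ((S + β • Γ)⁻¹) := funext fun β => hκ β
    rw [hfe]
    exact h2.continuousWithinAt
  -- limit at infinity
  set g : ℝ → ℝ := fun t => F ((t • S + Γ)⁻¹) with hg
  have hg0 : g 0 = B := by
    have hu : IsUnit Γ.det := hΓ.det_pos.ne'.isUnit
    have hmv : Γ *ᵥ (Γ⁻¹ *ᵥ b) = b := by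
      rw [mulVec_mulVec, mul_nonsing_inv _ hu, one_mulVec]
    simp only [hg, hF, zero_smul, zero_add, hmv]
    rw [dotProduct_comm]
  have hgcont : ContinuousAt g 0 := by
    have hdet : ((0:ℝ) • S + Γ).det ≠ 0 := by
      simpa using hΓ.det_pos.ne'
    have hinv : ContinuousAt Inv.inv ((0:ℝ) • S + Γ) := by
      apply continuousAt_matrix_inv
      rw [Ring.inverse_eq_inv']
      exact continuousAt_inv₀ hdet
    have hca : ContinuousAt (fun t : ℝ => t • S + Γ) 0 :=
      ((continuous_id.smul continuous_const).add continuous_const).continuousAt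
    have h1 : ContinuousAt (fun t : ℝ => (t • S + Γ)⁻¹) 0 := ContinuousAt.comp (f := fun t : ℝ => t • S + Γ) hinv hca
    exact hFcont.continuousAt.comp h1
  have hκeq : ∀ α : ℝ, 0 < α → κ α = g α⁻¹ := by
    intro α hα
    have hα' : α ≠ 0 := hα.ne'
    have hNpd : (α⁻¹ • S + Γ).PosDef :=
      Matrix.PosDef.posSemidef_add (posSemidef_smul hSps (inv_nonneg.mpr hα.le)) hΓ
    have hMsplit : S + α • Γ = α • (α⁻¹ • S + Γ) := by
      rw [smul_add, smul_smul, mul_inv_cancel₀ hα', one_smul]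
    have hαinv : Invertible α := invertibleOfNonzero hα'
    have hinv : (S + α • Γ)⁻¹ = α⁻¹ • (α⁻¹ • S + Γ)⁻¹ := by
      rw [hMsplit, Matrix.inv_smul (k := α) (h := hNpd.det_pos.ne'.isUnit),
        invOf_eq_inv α]
    rw [hκ, hinv]
    simp only [smul_mulVec, dotProduct_smul, smul_dotProduct, mulVec_smul, smul_eq_mul]
    have : g α⁻¹ = ((α⁻¹ • S + Γ)⁻¹ *ᵥ b) ⬝ᵥ (Γ *ᵥ ((α⁻¹ • S + Γ)⁻¹ *ᵥ b)) := rfl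
    rw [this]
    field_simp
  have htend : Filter.Tendsto κ Filter.atTop (nhds B) := by
    have h1 : Filter.Tendsto (fun α : ℝ => g α⁻¹) Filter.atTop (nhds B) := by
      rw [← hg0]
      exact hgcont.tendsto.comp tendsto_inv_atTop_zero
    refine h1.congr' ?_
    filter_upwards [Filter.eventually_gt_atTop 0] with α hα
    exact (hκeq α hα).symm
  have hρ2 : ρ ^ 2 < 1 := by nlinarith [hρ.1, hρ.2]
  have hlt : ρ ^ 2 * B < B := by nlinarith [hρ2, hBpos]
  have hev : ∀ᶠ α in Filter.atTop, ρ ^ 2 * B < κ α :=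
    htend.eventually (eventually_gt_nhds hlt)
  obtain ⟨α₂, hα₂ge, hα₂⟩ := ((Filter.eventually_ge_atTop α₁).and hev).exists
  have hsub : Set.Icc α₁ α₂ ⊆ Set.Ioi 0 := fun x hx => lt_of_lt_of_le hα₁ hx.1
  have := intermediate_value_Icc hα₂ge (hκcont.mono hsub)
  have hmem : ρ ^ 2 * B ∈ Set.Icc (κ α₁) (κ α₂) := ⟨hle, hα₂.le⟩
  obtain ⟨αstar, hαs, hval⟩ := this hmem
  exact ⟨αstar, lt_of_lt_of_le hα₁ hαs.1, hval⟩
end
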